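/- Let u be an infinite balanced word over a 2-letter alphabet obtained as a Sturmian word, and suppose x is obtained from u by Hubert's construction with y = (01)^ω and y' = 2^ω over the alphabet {0,1,2}. If x is cube-free, then for all sufficiently large k the partial quotients of the slope of u satisfy d_k = 2. -/

import Mathlib

/-- Standard words associated to the continued fraction `[0; d 1, d 2, ...]`. -/
def stdWord (d : ℕ → ℕ) : ℕ → List ℕ
  | 0 => [0]
  | 1 => List.replicate (d 1 - 1) 0 ++ [1]
  | (n+2) => (List.replicate (d (n+2)) (stdWord d (n+1))).flatten ++ stdWord d n

/-- The characteristic Sturmian word of slope `[0; d 1, d 2, ...]`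
(the limit of the standard words). -/
def charWord (d : ℕ → ℕ) (n : ℕ) : ℕ := (stdWord d (n+1)).getD n 0

/-- Number of occurrences of the letter `a` among `x 0, ..., x (n-1)`. -/
def countBelow (x : ℕ → ℕ) (a n : ℕ) : ℕ :=
  ((Finset.range n).filter fun j => x j = a).card

/-- `p` is a period of the finite word `w`. -/
def hasPeriod {α : Type*} (w : List α) (p : ℕ) : Prop :=
  0 < p ∧ ∀ i : ℕ, i + p < w.length → w[i]? = w[i + p]?

/-- The finite word `u` occurs in the infinite word `x` at position `i`. -/
def OccursAt (u : List ℕ) (x : ℕ → ℕ) (i : ℕ) : Prop :=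
  u = (List.range u.length).map fun j => x (i + j)

/-- `u` is a factor of the infinite word `x`. -/
def IsFactorI (u : List ℕ) (x : ℕ → ℕ) : Prop :=
  ∃ i : ℕ, OccursAt u x i

namespace CF

/-- m-fold repetition of a list -/
def pow (m : ℕ) (l : List ℕ) : List ℕ := (List.replicate m l).flatten

lemma pow_zero (l : List ℕ) : pow 0 l = [] := rfl

lemma pow_succ (m : ℕ) (l : List ℕ) : pow (m+1) l = l ++ pow m l := rfl

lemma pow_succ' (m : ℕ) (l : List ℕ) : pow (m+1) l = pow m l ++ l := by
  induction m with
  | zero => simp [pow_succ, pow_zero]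
  | succ n ih => rw [pow_succ, ih, ← List.append_assoc, ← pow_succ, ih]

lemma pow_comm (m : ℕ) (l : List ℕ) : l ++ pow m l = pow m l ++ l := by
  rw [← pow_succ, pow_succ']

lemma pow_length (m : ℕ) (l : List ℕ) : (pow m l).length = m * l.length := by
  induction m with
  | zero => simp [pow_zero]
  | succ n ih => rw [pow_succ]; simp [ih]; ring

lemma pow_getD (m j a : ℕ) (l : List ℕ) (h : j < m * l.length) :
    (pow m l).getD j a = l.getD (j % l.length) a := by
  induction m generalizing j with
  | zero => simp at h
  | succ n ih =>
    rw [Nat.succ_mul] at h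
    rw [pow_succ]
    rcases lt_or_ge j l.length with hj | hj
    · rw [List.getD_append _ _ _ _ hj, Nat.mod_eq_of_lt hj]
    · have hl : 0 < l.length := l.length.pos_of_ne_zero (by rintro h0; rw [h0] at h; omega)
      rw [List.getD_append_right _ _ _ _ hj, ih _ (by omega), Nat.mod_eq_sub_mod hj]

variable (d : ℕ → ℕ)

lemma std_two (n : ℕ) :
    stdWord d (n+2) = pow (d (n+2)) (stdWord d (n+1)) ++ stdWord d n := rfl

/-- length of standard words -/
def q (n : ℕ) : ℕ := (stdWord d n).length

lemma q_zero : q d 0 = 1 := rfl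

lemma q_one (h : 1 ≤ d 1) : q d 1 = d 1 := by
  simp [q, stdWord]; omega

lemma q_rec (n : ℕ) : q d (n+2) = d (n+2) * q d (n+1) + q d n := by
  simp [q, std_two, pow_length]

lemma q_pos (hd : ∀ i : ℕ, 1 ≤ d (i + 1)) : ∀ n, 1 ≤ q d n := by
  intro n
  induction n using Nat.strong_induction_on with
  | _ n ih =>
    match n with
    | 0 => exact le_refl 1
    | 1 => rw [q_one d (hd 0)]; exact hd 0
    | (m+2) =>
      rw [q_rec]
      have := ih m (by omega)
      omega

lemma q_ge (hd : ∀ i : ℕ, 1 ≤ d (i + 1)) : ∀ n, n ≤ q d n := by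
  intro n
  induction n using Nat.strong_induction_on with
  | _ n ih =>
    match n with
    | 0 => omega
    | 1 => rw [q_one d (hd 0)]; exact hd 0
    | (m+2) =>
      rw [q_rec]
      have h1 := ih (m+1) (by omega)
      have h2 := q_pos d hd m
      have h3 := hd (m+1)
      nlinarith

lemma prefix_succ (hd : ∀ i : ℕ, 1 ≤ d (i + 1)) (n : ℕ) :
    stdWord d (n+1) <+: stdWord d (n+2) := by
  rw [std_two]
  have h : 1 ≤ d (n+2) := hd (n+1)
  obtain ⟨m, hm⟩ : ∃ m, d (n+2) = m + 1 := ⟨d (n+2) - 1, by omega⟩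
  rw [hm, pow_succ, List.append_assoc]
  exact List.prefix_append _ _

lemma prefix_chain (hd : ∀ i : ℕ, 1 ≤ d (i + 1)) :
    ∀ a b, a ≤ b → stdWord d (a+1) <+: stdWord d (b+1) := by
  intro a b hab
  induction b with
  | zero => match a, hab with | 0, _ => exact List.prefix_refl _
  | succ m ih =>
    rcases Nat.lt_or_ge a (m+1) with h | h
    · exact (ih (by omega)).trans (prefix_succ d hd m)
    · have : a = m + 1 := by omega
      subst this; exact List.prefix_refl _

lemma getD_prefix {l1 l2 : List ℕ} (h : l1 <+: l2) {n : ℕ} (hn : n < l1.length) (a : ℕ) :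
    l1.getD n a = l2.getD n a := by
  obtain ⟨t, rfl⟩ := h
  rw [List.getD_append _ _ _ _ hn]

lemma cw_eq (hd : ∀ i : ℕ, 1 ≤ d (i + 1)) (m j : ℕ) (h : j < q d (m+1)) :
    charWord d j = (stdWord d (m+1)).getD j 0 := by
  unfold charWord
  have hj : j < q d (j+1) := by have := q_ge d hd (j+1); omega
  rcases Nat.le_total j m with hle | hle
  · rw [getD_prefix (prefix_chain d hd j m hle) hj,
        getD_prefix (prefix_chain d hd m m le_rfl) h]
  · rw [getD_prefix (prefix_chain d hd j j le_rfl) hj,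
        getD_prefix (prefix_chain d hd m j hle) h]

lemma pow_one (l : List ℕ) : pow 1 l = l := by
  rw [pow_succ, pow_zero, List.append_nil]

lemma pref_ext {u v : List ℕ} (w : List ℕ) (h : u <+: v) : u <+: v ++ w :=
  h.trans (List.prefix_append _ _)

lemma pref_cons (u : List ℕ) {v w : List ℕ} (h : v <+: w) : u ++ v <+: u ++ w := by
  obtain ⟨t, rfl⟩ := h
  exact ⟨t, by simp⟩

lemma q_step (hd : ∀ i : ℕ, 1 ≤ d (i + 1)) (n : ℕ) :
    q d (n+1) + q d n ≤ q d (n+2) := by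
  rw [q_rec]
  have h1 : 1 ≤ d (n+2) := hd (n+1)
  nlinarith

lemma q_mono (hd : ∀ i : ℕ, 1 ≤ d (i + 1)) (n : ℕ) : q d (n+1) ≤ q d (n+2) := by
  have := q_step d hd n
  have := q_pos d hd n
  omega

lemma prefix_concat (hd : ∀ i : ℕ, 1 ≤ d (i + 1)) (n : ℕ) :
    stdWord d (n+2) ++ stdWord d (n+1) <+: stdWord d (n+3) := by
  have h : 1 ≤ d (n+3) := hd (n+2)
  rw [show stdWord d (n+3) = pow (d (n+3)) (stdWord d (n+2)) ++ stdWord d (n+1) from rfl]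
  rcases Nat.lt_or_ge (d (n+3)) 2 with h2 | h2
  · have : d (n+3) = 1 := by omega
    rw [this, pow_one]
  · obtain ⟨m, hm⟩ : ∃ m, d (n+3) = m + 2 := ⟨d (n+3) - 2, by omega⟩
    rw [hm, pow_succ, List.append_assoc]
    refine pref_cons _ ?_
    rw [pow_succ, List.append_assoc]
    exact pref_ext _ (prefix_succ d hd n)

lemma cw_concat (hd : ∀ i : ℕ, 1 ≤ d (i + 1)) (n j : ℕ)
    (h : j < q d (n+2) + q d (n+1)) :
    charWord d j = (stdWord d (n+2) ++ stdWord d (n+1)).getD j 0 := by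
  have hlen : q d (n+2) + q d (n+1) ≤ q d (n+3) := q_step d hd (n+1)
  rw [cw_eq d hd (n+2) j (by show j < q d (n+3); omega),
    getD_prefix (prefix_concat d hd n) (by simp [q] at h ⊢; omega) 0]

/-- the central occurrence: at position `d (n+3) * q d (n+2)`, the word
`s (n+1) ++ s (n+2) ++ s (n+1)` occurs in the characteristic word. -/
lemma occ (hd : ∀ i : ℕ, 1 ≤ d (i + 1)) (n j : ℕ)
    (hj : j < 2 * q d (n+1) + q d (n+2)) :
    charWord d (d (n+3) * q d (n+2) + j)
      = (stdWord d (n+1) ++ stdWord d (n+2) ++ stdWord d (n+1)).getD j 0 := by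
  set i := d (n+3) * q d (n+2) with hi
  -- the big prefix
  have hq3 : q d (n+3) = d (n+3) * q d (n+2) + q d (n+1) := q_rec d (n+1)
  have hq4 : q d (n+3) + q d (n+2) ≤ q d (n+4) := q_step d hd (n+2)
  have hij : i + j < q d (n+4) + q d (n+3) := by omega
  rw [cw_concat d hd (n+2) (i+j) hij]
  -- decompose s (n+4) ++ s (n+3) = A ++ (s(n+1) ++ T)
  have hD : 1 ≤ d (n+4) := hd (n+3)
  obtain ⟨D, hDm⟩ : ∃ D, d (n+4) = D + 1 := ⟨d (n+4) - 1, by omega⟩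
  have hdec : stdWord d (n+4) ++ stdWord d (n+3)
      = pow (d (n+3)) (stdWord d (n+2)) ++ (stdWord d (n+1)
        ++ (pow D (stdWord d (n+3)) ++ (stdWord d (n+2) ++ stdWord d (n+3)))) := by
    rw [show stdWord d (n+4) = pow (d (n+4)) (stdWord d (n+3)) ++ stdWord d (n+2) from rfl,
      hDm, pow_succ,
      show stdWord d (n+3) = pow (d (n+3)) (stdWord d (n+2)) ++ stdWord d (n+1) from rfl]
    simp [List.append_assoc]
  have hT : stdWord d (n+2) ++ stdWord d (n+1)
      <+: pow D (stdWord d (n+3)) ++ (stdWord d (n+2) ++ stdWord d (n+3)) := by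
    rcases Nat.eq_zero_or_pos D with hD0 | hD0
    · rw [hD0, pow_zero, List.nil_append]
      refine pref_cons _ ?_
      exact (prefix_succ d hd n).trans (prefix_succ d hd (n+1))
    · obtain ⟨D', hD'⟩ : ∃ D', D = D' + 1 := ⟨D - 1, by omega⟩
      rw [hD', pow_succ, List.append_assoc]
      exact pref_ext _ (prefix_concat d hd n)
  have hW : stdWord d (n+1) ++ stdWord d (n+2) ++ stdWord d (n+1)
      <+: stdWord d (n+1) ++ (pow D (stdWord d (n+3)) ++ (stdWord d (n+2) ++ stdWord d (n+3))) := by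
    rw [List.append_assoc]
    exact pref_cons _ hT
  rw [hdec]
  have hlenA : (pow (d (n+3)) (stdWord d (n+2))).length = i := by
    rw [pow_length]; rfl
  rw [List.getD_append_right _ _ _ _ (by omega), hlenA]
  have : i + j - i = j := by omega
  rw [this]
  have hjW : j < (stdWord d (n+1) ++ stdWord d (n+2) ++ stdWord d (n+1)).length := by
    simp [q] at hj ⊢; omega
  exact (getD_prefix hW hjW 0).symm

lemma getD_take {l : List ℕ} {t j : ℕ} (h : j < t) (a : ℕ) :
    (l.take t).getD j a = l.getD j a := by
  rcases Nat.lt_or_ge j l.length with hj | hj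
  · have h1 : j < (l.take t).length := by
      rw [List.length_take]; omega
    conv_rhs => rw [← List.take_append_drop t l]
    rw [List.getD_append _ _ _ _ h1]
  · rw [List.getD_eq_default _ _ (by rw [List.length_take]; omega),
      List.getD_eq_default _ _ hj]

/-- the almost-commutation of consecutive standard words -/
lemma swap (hd : ∀ i : ℕ, 1 ≤ d (i + 1)) (n : ℕ) :
    (stdWord d (n+1) ++ stdWord d (n+2)).take (q d (n+1) + q d (n+2) - 2)
      = (stdWord d (n+2) ++ stdWord d (n+1)).take (q d (n+1) + q d (n+2) - 2) := by
  induction n with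
  | zero =>
    have hd1 : 1 ≤ d 1 := hd 0
    have hq1 : q d 1 = d 1 := q_one d hd1
    have hq2 : q d 2 = d 2 * d 1 + 1 := by rw [q_rec, hq1]; rfl
    have hs1 : stdWord d 1 = List.replicate (d 1 - 1) 0 ++ [1] := rfl
    have hdec1 : stdWord d 1 ++ stdWord d 2
        = pow (d 2) (stdWord d 1) ++ (stdWord d 1 ++ [0]) := by
      rw [show stdWord d 2 = pow (d 2) (stdWord d 1) ++ stdWord d 0 from rfl]
      rw [show stdWord d 0 = [0] from rfl, ← List.append_assoc, pow_comm, List.append_assoc]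
    have hdec2 : stdWord d 2 ++ stdWord d 1
        = pow (d 2) (stdWord d 1) ++ ([0] ++ stdWord d 1) := by
      rw [show stdWord d 2 = pow (d 2) (stdWord d 1) ++ stdWord d 0 from rfl]
      rw [show stdWord d 0 = [0] from rfl, List.append_assoc]
    have hlenpow : (pow (d 2) (stdWord d 1)).length = d 2 * d 1 := by
      rw [pow_length]; rw [show (stdWord d 1).length = q d 1 from rfl, hq1]
    have htarg : q d 1 + q d 2 - 2 = (pow (d 2) (stdWord d 1)).length + (d 1 - 1) := by
      rw [hlenpow, hq1, hq2]; omega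
    rw [hdec1, hdec2, htarg, List.take_length_add_append, List.take_length_add_append]
    congr 1
    -- (s1 ++ [0]).take (d1 - 1) = ([0] ++ s1).take (d1 - 1)
    rw [hs1, List.append_assoc]
    rw [List.take_append_of_le_length (by simp)]
    have : ([0] : List ℕ) ++ (List.replicate (d 1 - 1) 0 ++ [1])
        = List.replicate (d 1) 0 ++ [1] := by
      rw [← List.append_assoc]
      congr 1
      rw [show ([0] : List ℕ) = List.replicate 1 0 from rfl, ← List.replicate_add]
      congr 1; omega
    rw [this, List.take_append_of_le_length (by simp)]
    simp [List.take_replicate]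
  | succ m ih =>
    have hdec1 : stdWord d (m+2) ++ stdWord d (m+3)
        = pow (d (m+3)) (stdWord d (m+2)) ++ (stdWord d (m+2) ++ stdWord d (m+1)) := by
      rw [show stdWord d (m+3) = pow (d (m+3)) (stdWord d (m+2)) ++ stdWord d (m+1) from rfl,
        ← List.append_assoc, pow_comm, List.append_assoc]
    have hdec2 : stdWord d (m+3) ++ stdWord d (m+2)
        = pow (d (m+3)) (stdWord d (m+2)) ++ (stdWord d (m+1) ++ stdWord d (m+2)) := by
      rw [show stdWord d (m+3) = pow (d (m+3)) (stdWord d (m+2)) ++ stdWord d (m+1) from rfl,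
        List.append_assoc]
    have hq3 : q d (m+3) = d (m+3) * q d (m+2) + q d (m+1) := q_rec d (m+1)
    have hp1 := q_pos d hd (m+1)
    have hp2 := q_pos d hd (m+2)
    have htarg : q d (m+2) + q d (m+3) - 2
        = (pow (d (m+3)) (stdWord d (m+2))).length + (q d (m+1) + q d (m+2) - 2) := by
      rw [pow_length]
      rw [show (stdWord d (m+2)).length = q d (m+2) from rfl]
      omega
    rw [hdec1, hdec2, htarg, List.take_length_add_append, List.take_length_add_append, ih.symm]

/-- the main periodicity result: near position `d (m+4) * q d (m+3)`, the
characteristic word looks like a power of `s (m+2)`. -/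
lemma main (hd : ∀ i : ℕ, 1 ≤ d (i + 1)) (m j : ℕ)
    (hj : j < (d (m+3) + 2) * q d (m+2) + q d (m+1) - 2) :
    charWord d (d (m+4) * q d (m+3) + j)
      = (stdWord d (m+2)).getD (j % q d (m+2)) 0 := by
  have hp1 := q_pos d hd (m+1)
  have hp2 := q_pos d hd (m+2)
  have hq3 : q d (m+3) = d (m+3) * q d (m+2) + q d (m+1) := q_rec d (m+1)
  have hdist : (d (m+3) + 2) * q d (m+2) = d (m+3) * q d (m+2) + 2 * q d (m+2) := by ring
  have hjW : j < 2 * q d (m+2) + q d (m+3) := by omega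
  rw [occ d hd (m+1) j hjW]
  set e := d (m+3) with he
  set Mk := (e + 2) * q d (m+2) + q d (m+1) - 2 with hMk
  -- W = pow (e+1) s(m+2) ++ (s(m+1) ++ s(m+2))
  have hWdec : stdWord d (m+2) ++ stdWord d (m+3) ++ stdWord d (m+2)
      = pow (e+1) (stdWord d (m+2)) ++ ((stdWord d (m+1) ++ stdWord d (m+2))) := by
    rw [show stdWord d (m+3) = pow e (stdWord d (m+2)) ++ stdWord d (m+1) from rfl,
      pow_succ]
    simp [List.append_assoc]
  have hVdec : pow (e+1) (stdWord d (m+2)) ++ ((stdWord d (m+2) ++ stdWord d (m+1)))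
      = pow (e+2) (stdWord d (m+2)) ++ stdWord d (m+1) := by
    rw [show pow (e+2) (stdWord d (m+2)) = pow (e+1) (stdWord d (m+2)) ++ stdWord d (m+2)
      from pow_succ' (e+1) _]
    simp [List.append_assoc]
  have hlenpow : (pow (e+1) (stdWord d (m+2))).length = (e+1) * q d (m+2) := by
    rw [pow_length]; rfl
  have htake : (stdWord d (m+2) ++ stdWord d (m+3) ++ stdWord d (m+2)).take Mk
      = (pow (e+2) (stdWord d (m+2)) ++ stdWord d (m+1)).take Mk := by
    rw [hWdec, ← hVdec]
    have hMk' : Mk = (pow (e+1) (stdWord d (m+2))).length + (q d (m+1) + q d (m+2) - 2) := by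
      rw [hlenpow, hMk]
      have h2 : (e+2) * q d (m+2) = (e+1) * q d (m+2) + q d (m+2) := by ring
      omega
    rw [hMk', List.take_length_add_append, List.take_length_add_append, swap d hd m]
  have hjM : j < Mk := hj
  rw [← getD_take hjM 0, htake, getD_take hjM 0]
  -- now the periodic word
  have hpref : pow (e+2) (stdWord d (m+2)) ++ stdWord d (m+1)
      <+: pow (e+3) (stdWord d (m+2)) := by
    rw [show pow (e+3) (stdWord d (m+2)) = pow (e+2) (stdWord d (m+2)) ++ stdWord d (m+2)
      from pow_succ' (e+2) _]
    exact pref_cons _ (prefix_succ d hd m)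
  have hjlen : j < (pow (e+2) (stdWord d (m+2)) ++ stdWord d (m+1)).length := by
    rw [List.length_append, pow_length]
    rw [show (stdWord d (m+2)).length = q d (m+2) from rfl,
      show (stdWord d (m+1)).length = q d (m+1) from rfl]
    have : Mk ≤ (e+2) * q d (m+2) + q d (m+1) := by omega
    omega
  rw [getD_prefix hpref hjlen 0]
  rw [pow_getD _ _ _ _ (by
    rw [show (stdWord d (m+2)).length = q d (m+2) from rfl]
    have : Mk ≤ (e+2) * q d (m+2) + q d (m+1) := by omega
    have hq12 : q d (m+1) ≤ q d (m+2) := q_mono d hd m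
    have : (e+2) * q d (m+2) + q d (m+2) = (e+3) * q d (m+2) := by ring
    omega)]
  rfl

/-- starting position of the key occurrence -/
def ipos (mm : ℕ) : ℕ := d (mm+4) * q d (mm+3)

/-- length of the guaranteed periodic stretch -/
def Mk (mm : ℕ) : ℕ := (d (mm+3) + 2) * q d (mm+2) + q d (mm+1) - 2

lemma main' (hd : ∀ i : ℕ, 1 ≤ d (i + 1)) (mm j : ℕ) (hj : j < Mk d mm) :
    charWord d (ipos d mm + j) = (stdWord d (mm+2)).getD (j % q d (mm+2)) 0 :=
  main d hd mm j hj

/-- number of zeros in a standard word -/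
def z (n : ℕ) : ℕ := (stdWord d n).count 0

lemma count_pow (m : ℕ) (l : List ℕ) : (pow m l).count 0 = m * l.count 0 := by
  induction m with
  | zero => simp [pow_zero]
  | succ n ih => rw [pow_succ, List.count_append, ih]; ring

lemma z_rec (n : ℕ) : z d (n+2) = d (n+2) * z d (n+1) + z d n := by
  unfold z
  rw [std_two, List.count_append, count_pow]

lemma count_getD (l : List ℕ) :
    l.count 0 = ∑ r ∈ Finset.range l.length, if l.getD r 0 = 0 then 1 else 0 := by
  induction l with
  | nil => simp
  | cons a t ih =>
    rw [List.length_cons, Finset.sum_range_succ']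
    simp only [List.getD_cons_succ, List.getD_cons_zero]
    rw [← ih, List.count_cons]
    simp [beq_iff_eq]

/-- number of zeros of the characteristic word in the window `[a, a+t)` -/
def win (a t : ℕ) : ℕ := ∑ u ∈ Finset.range t, if charWord d (a + u) = 0 then 1 else 0

lemma cb_succ (f : ℕ → ℕ) (n : ℕ) :
    countBelow f 0 (n+1) = countBelow f 0 n + if f n = 0 then 1 else 0 := by
  unfold countBelow
  by_cases h : f n = 0
  · rw [if_pos h, Finset.range_add_one, Finset.filter_insert, if_pos h,
      Finset.card_insert_of_notMem (by simp)]
  · rw [if_neg h, Finset.range_add_one, Finset.filter_insert, if_neg h, add_zero]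

lemma cb_add (a t : ℕ) :
    countBelow (charWord d) 0 (a + t) = countBelow (charWord d) 0 a + win d a t := by
  induction t with
  | zero => simp [win]
  | succ n ih =>
    rw [show a + (n+1) = (a + n) + 1 from rfl, cb_succ, ih]
    unfold win
    rw [Finset.sum_range_succ, Nat.add_assoc]

lemma win_const (hd : ∀ i : ℕ, 1 ≤ d (i + 1)) (mm : ℕ) :
    ∀ jj, jj + q d (mm+2) ≤ Mk d mm →
      win d (ipos d mm + jj) (q d (mm+2)) = z d (mm+2) := by
  have hQ := q_pos d hd (mm+2)
  intro jj
  induction jj with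
  | zero =>
    intro h0
    have hcount : z d (mm+2)
        = ∑ r ∈ Finset.range (q d (mm+2)), if (stdWord d (mm+2)).getD r 0 = 0 then 1 else 0 :=
      count_getD _
    rw [hcount]
    unfold win
    apply Finset.sum_congr rfl
    intro u hu
    rw [Finset.mem_range] at hu
    rw [show ipos d mm + 0 + u = ipos d mm + u from by omega]
    rw [main' d hd mm u (by omega), Nat.mod_eq_of_lt hu]
  | succ jj ih =>
    intro h1
    have h0 : jj + q d (mm+2) ≤ Mk d mm := by omega
    have hIH := ih h0
    have hA1 : win d (ipos d mm + jj) (q d (mm+2) + 1)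
        = win d (ipos d mm + jj) (q d (mm+2))
          + (if charWord d (ipos d mm + jj + q d (mm+2)) = 0 then 1 else 0) := by
      unfold win
      rw [Finset.sum_range_succ]
    have hA2 : win d (ipos d mm + jj) (q d (mm+2) + 1)
        = win d (ipos d mm + (jj+1)) (q d (mm+2))
          + (if charWord d (ipos d mm + jj) = 0 then 1 else 0) := by
      unfold win
      rw [Finset.sum_range_succ', Nat.add_zero]
      congr 1
      apply Finset.sum_congr rfl
      intro u _
      rw [show ipos d mm + jj + (u + 1) = ipos d mm + (jj + 1) + u from by omega]
    have hlet : charWord d (ipos d mm + jj) = charWord d (ipos d mm + jj + q d (mm+2)) := by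
      rw [show ipos d mm + jj + q d (mm+2) = ipos d mm + (jj + q d (mm+2)) from by omega]
      rw [main' d hd mm jj (by omega), main' d hd mm (jj + q d (mm+2)) (by omega),
        Nat.add_mod_right]
    rw [hlet] at hA2
    omega

lemma cb_step (hd : ∀ i : ℕ, 1 ≤ d (i + 1)) (mm jj : ℕ) (h : jj + q d (mm+2) ≤ Mk d mm) :
    countBelow (charWord d) 0 (ipos d mm + jj + q d (mm+2))
      = countBelow (charWord d) 0 (ipos d mm + jj) + z d (mm+2) := by
  rw [cb_add, win_const d hd mm jj h]

lemma get?_mapRange (f : ℕ → ℕ) {L jj : ℕ} (h : jj < L) :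
    ((List.range L).map f)[jj]? = some (f jj) := by
  rw [List.getElem?_map, List.getElem?_range h, Option.map_some]

section withx
variable (x : ℕ → ℕ)
variable (hcube : ∀ (w : List ℕ) (pp : ℕ), IsFactorI w x → w ≠ [] → hasPeriod w pp →
      w.length < 3 * pp)

include hcube in
lemma cube_bound (i0 L p : ℕ) (hp : 0 < p) (hL : 0 < L)
    (hper : ∀ j, j + p < L → x (i0 + j) = x (i0 + j + p)) : L < 3 * p := by
  have hlen : ((List.range L).map fun j => x (i0 + j)).length = L := by simp
  have hocc : OccursAt ((List.range L).map fun j => x (i0 + j)) x i0 := by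
    unfold OccursAt
    rw [hlen]
  have hne : ((List.range L).map fun j => x (i0 + j)) ≠ [] := by
    intro hcon
    rw [← List.length_eq_zero_iff] at hcon
    omega
  have hperiod : hasPeriod ((List.range L).map fun j => x (i0 + j)) p := by
    refine ⟨hp, ?_⟩
    intro jj hjj
    rw [hlen] at hjj
    rw [get?_mapRange _ (by omega), get?_mapRange _ (by omega)]
    rw [hper jj hjj, Nat.add_assoc]
  have := hcube _ p ⟨i0, hocc⟩ hne hperiod
  rwa [hlen] at this
end withx

section keysec
variable (hd : ∀ i : ℕ, 1 ≤ d (i + 1)) (x : ℕ → ℕ)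
variable (hx : ∀ n : ℕ, x n = if charWord d n = 0 then countBelow (charWord d) 0 n % 2 else 2)
variable (hcube : ∀ (w : List ℕ) (pp : ℕ), IsFactorI w x → w ≠ [] → hasPeriod w pp →
      w.length < 3 * pp)

include hd hx hcube in
lemma zz_odd (mm : ℕ) (hq2 : 2 ≤ q d (mm+1)) : ¬ 2 ∣ z d (mm+2) := by
  intro hev
  have hQ := q_pos d hd (mm+2)
  have hd3 := hd (mm+2)
  have hdist : (d (mm+3) + 2) * q d (mm+2)
      = d (mm+3) * q d (mm+2) + 2 * q d (mm+2) := by ring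
  have hdQ : q d (mm+2) ≤ d (mm+3) * q d (mm+2) := by
    calc q d (mm+2) = 1 * q d (mm+2) := by ring
    _ ≤ d (mm+3) * q d (mm+2) := Nat.mul_le_mul_right _ hd3
  have hMk : Mk d mm = (d (mm+3) + 2) * q d (mm+2) + q d (mm+1) - 2 := rfl
  set L := (d (mm+3) + 2) * q d (mm+2) with hL
  have hLMk : L ≤ Mk d mm := by omega
  have hper : ∀ j, j + q d (mm+2) < L → x (ipos d mm + j) = x (ipos d mm + j + q d (mm+2)) := by
    intro j hj
    have hlet : charWord d (ipos d mm + j) = charWord d (ipos d mm + j + q d (mm+2)) := by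
      rw [show ipos d mm + j + q d (mm+2) = ipos d mm + (j + q d (mm+2)) from by omega]
      rw [main' d hd mm j (by omega), main' d hd mm (j + q d (mm+2)) (by omega),
        Nat.add_mod_right]
    rw [hx (ipos d mm + j), hx (ipos d mm + j + q d (mm+2)), ← hlet]
    by_cases hc : charWord d (ipos d mm + j) = 0
    · rw [if_pos hc, if_pos hc, cb_step d hd mm j (by omega)]
      omega
    · rw [if_neg hc, if_neg hc]
  have hcb := cube_bound x hcube (ipos d mm) L (q d (mm+2)) (by omega) (by omega) hper
  omega

include hd hx hcube in
lemma d_le3 (mm : ℕ) (hq2 : 2 ≤ q d (mm+1)) : d (mm+3) ≤ 3 := by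
  by_contra hcon
  have hQ := q_pos d hd (mm+2)
  have hdist : (d (mm+3) + 2) * q d (mm+2)
      = d (mm+3) * q d (mm+2) + 2 * q d (mm+2) := by ring
  have hdQ : 4 * q d (mm+2) ≤ d (mm+3) * q d (mm+2) := Nat.mul_le_mul_right _ (by omega)
  have hMk : Mk d mm = (d (mm+3) + 2) * q d (mm+2) + q d (mm+1) - 2 := rfl
  set L := (d (mm+3) + 2) * q d (mm+2) with hL
  have hLMk : L ≤ Mk d mm := by omega
  have hper : ∀ j, j + 2 * q d (mm+2) < L →
      x (ipos d mm + j) = x (ipos d mm + j + 2 * q d (mm+2)) := by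
    intro j hj
    have hmod : (j + 2 * q d (mm+2)) % q d (mm+2) = j % q d (mm+2) := by
      rw [two_mul, ← Nat.add_assoc, Nat.add_mod_right, Nat.add_mod_right]
    have hlet : charWord d (ipos d mm + j)
        = charWord d (ipos d mm + j + 2 * q d (mm+2)) := by
      rw [show ipos d mm + j + 2 * q d (mm+2) = ipos d mm + (j + 2 * q d (mm+2)) from by omega]
      rw [main' d hd mm j (by omega), main' d hd mm (j + 2 * q d (mm+2)) (by omega), hmod]
    rw [hx (ipos d mm + j), hx (ipos d mm + j + 2 * q d (mm+2)), ← hlet]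
    by_cases hc : charWord d (ipos d mm + j) = 0
    · rw [if_pos hc, if_pos hc]
      have hc1 := cb_step d hd mm j (by omega)
      have hc2 := cb_step d hd mm (j + q d (mm+2)) (by omega)
      rw [show ipos d mm + (j + q d (mm+2)) = ipos d mm + j + q d (mm+2) from by omega] at hc2
      rw [show ipos d mm + j + 2 * q d (mm+2)
          = ipos d mm + j + q d (mm+2) + q d (mm+2) from by omega]
      omega
    · rw [if_neg hc, if_neg hc]
  have hcb := cube_bound x hcube (ipos d mm) L (2 * q d (mm+2)) (by omega) (by omega) hper
  omega

end keysec

end CF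

theorem cubefree_forces_partial_quotients_two (d : ℕ → ℕ)
    (hd : ∀ i : ℕ, 1 ≤ d (i + 1)) (x : ℕ → ℕ)
    (hx : ∀ n : ℕ, x n = if charWord d n = 0 then countBelow (charWord d) 0 n % 2 else 2)
    (hcube : ∀ (w : List ℕ) (pp : ℕ), IsFactorI w x → w ≠ [] → hasPeriod w pp →
      w.length < 3 * pp) :
    ∃ N : ℕ, ∀ k : ℕ, N ≤ k → d k = 2 := by
  refine ⟨5, ?_⟩
  intro k hk
  obtain ⟨m, rfl⟩ : ∃ m, k = m + 5 := ⟨k - 5, by omega⟩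
  have hq1 : 2 ≤ CF.q d (m+2) := by have := CF.q_ge d hd (m+2); omega
  have hq2 : 2 ≤ CF.q d (m+3) := by have := CF.q_ge d hd (m+3); omega
  have hq3 : 2 ≤ CF.q d (m+4) := by have := CF.q_ge d hd (m+4); omega
  have hz3 : ¬ 2 ∣ CF.z d (m+3) := CF.zz_odd d hd x hx hcube (m+1) hq1
  have hz4 : ¬ 2 ∣ CF.z d (m+4) := CF.zz_odd d hd x hx hcube (m+2) hq2
  have hz5 : ¬ 2 ∣ CF.z d (m+5) := CF.zz_odd d hd x hx hcube (m+3) hq3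
  have hle : d (m+5) ≤ 3 := CF.d_le3 d hd x hx hcube (m+2) hq2
  have hrec : CF.z d (m+5) = d (m+5) * CF.z d (m+4) + CF.z d (m+3) := CF.z_rec d (m+3)
  have hge : 1 ≤ d (m+5) := hd (m+4)
  have heven : 2 ∣ d (m+5) := by
    rcases Nat.even_or_odd (d (m+5)) with h | h
    · obtain ⟨c, hc⟩ := h
      exact ⟨c, by omega⟩
    · exfalso
      obtain ⟨c, hc⟩ := h
      have hmul : d (m+5) * CF.z d (m+4) = 2 * (c * CF.z d (m+4)) + CF.z d (m+4) := by
        rw [hc]; ring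
      omega
  omega
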